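/- Let r : ℝ → ℝ² and τ, ν : ℝ → ℝ² and y : ℝ → ℝ be differentiable and satisfy the frame equations r' = y·τ, τ' = ν, ν' = −τ. Let γ ∈ ℝ with sin γ ≠ 0, and let a : ℝ → ℝ be differentiable with y + (a·y)' = a·y·(cos γ / sin γ). Define r̃ := r + a·y·τ, ỹ := a·y / sin γ, τ̃ := τ·cos γ + ν·sin γ, ν̃ := ν·cos γ − τ·sin γ. Then r̃' = ỹ·τ̃, τ̃' = ν̃, and ν̃' = −τ̃; that is, the curve r̃, which meets every tangent line of r under the constant angle γ, carries a frame of the same form in the same parameter t. -/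

import Mathlib

/-- A loxodrome `r̃ = r + a·y·τ` of a curve `r` with frame
`r' = y·τ, τ' = ν, ν' = −τ` carries a frame of the same form in the same parameter,
provided the coefficient `a` satisfies the constraint (ya):
`y + (a·y)' = a·y·cot γ`. -/
theorem loxodrome_frame
    (r τ ν : ℝ → ℝ × ℝ) (y a : ℝ → ℝ) (γ : ℝ)
    (hr : Differentiable ℝ r) (hτ : Differentiable ℝ τ) (hν : Differentiable ℝ ν)
    (hy : Differentiable ℝ y) (ha : Differentiable ℝ a)
    (hframe_r : ∀ t, deriv r t = y t • τ t)
    (hframe_τ : ∀ t, deriv τ t = ν t)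
    (hframe_ν : ∀ t, deriv ν t = -τ t)
    (hγ : Real.sin γ ≠ 0)
    (hya : ∀ t, y t + deriv (fun s => a s * y s) t
      = a t * y t * (Real.cos γ / Real.sin γ))
    (rt τt νt : ℝ → ℝ × ℝ) (yt : ℝ → ℝ)
    (hrt : ∀ t, rt t = r t + (a t * y t) • τ t)
    (hyt : ∀ t, yt t = a t * y t / Real.sin γ)
    (hτt : ∀ t, τt t = Real.cos γ • τ t + Real.sin γ • ν t)
    (hνt : ∀ t, νt t = Real.cos γ • ν t - Real.sin γ • τ t) :
    (∀ t, deriv rt t = yt t • τt t) ∧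
    (∀ t, deriv τt t = νt t) ∧
    (∀ t, deriv νt t = -τt t) := by
  have hg : Differentiable ℝ (fun s => a s * y s) := ha.mul hy
  have hrt' : rt = fun t => r t + (a t * y t) • τ t := funext hrt
  have hτt' : τt = fun t => Real.cos γ • τ t + Real.sin γ • ν t := funext hτt
  have hνt' : νt = fun t => Real.cos γ • ν t - Real.sin γ • τ t := funext hνt
  refine ⟨?_, ?_, ?_⟩
  · intro t
    rw [hrt', deriv_fun_add (hr t) ((hg t).fun_smul (hτ t)),
      deriv_fun_smul (hg t) (hτ t), hframe_r, hframe_τ, hyt t, hτt t]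
    have h3 : deriv (fun s => a s * y s) t
        = a t * y t * (Real.cos γ / Real.sin γ) - y t := by linarith [hya t]
    rw [h3]
    have h2 : a t * y t / Real.sin γ * Real.sin γ = a t * y t :=
      div_mul_cancel₀ _ hγ
    have h4 : a t * y t / Real.sin γ * Real.cos γ
        = a t * y t * (Real.cos γ / Real.sin γ) := by ring
    rw [smul_add, smul_smul, smul_smul, h2, h4]
    module
  · intro t
    rw [hτt', deriv_fun_add ((hτ t).fun_const_smul _) ((hν t).fun_const_smul _),
      deriv_fun_const_smul _ (hτ t), deriv_fun_const_smul _ (hν t),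
      hframe_τ, hframe_ν, hνt t]
    module
  · intro t
    rw [hνt', deriv_fun_sub ((hν t).fun_const_smul _) ((hτ t).fun_const_smul _),
      deriv_fun_const_smul _ (hν t), deriv_fun_const_smul _ (hτ t),
      hframe_τ, hframe_ν, hτt t]
    module
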